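/- Let S be a semiring (commutative, possibly without neutral elements) and let a, b ∈ S be such that k·a = l·a + b for some k, l ≥ 1 with k ≠ l. If b has finite order, then a has finite order. -/
import Mathlib

/-- `nmul n a` is the `n`-fold sum `a + ⋯ + a` (for `n ≥ 1`; `nmul 0 a = a` is junk). -/
def nmul {S : Type*} [Add S] (n : ℕ) (a : S) : S :=
  Nat.rec a (fun _ b => b + a) (n - 1)

/-- The set `{n·a : n ≥ 1}`; `a` has finite order iff this set is finite. -/
def addOrbit {S : Type*} [Add S] (a : S) : Set S :=
  {x | ∃ n : ℕ, 1 ≤ n ∧ nmul n a = x}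

lemma nmul_one' {S : Type*} [Add S] (a : S) : nmul 1 a = a := rfl

lemma nmul_succ' {S : Type*} [Add S] (n : ℕ) (a : S) :
    nmul (n + 2) a = nmul (n + 1) a + a := rfl

lemma nmul_add' {S : Type*} [AddCommSemigroup S] (a : S) :
    ∀ m n : ℕ, nmul (m + 1 + (n + 1)) a = nmul (m + 1) a + nmul (n + 1) a := by
  intro m n
  induction n with
  | zero => rfl
  | succ n ih =>
      have e1 : m + 1 + (n + 1 + 1) = (m + n + 1) + 2 := by omega
      have e2 : m + 1 + (n + 1) = (m + n + 1) + 1 := by omega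
      rw [e1, nmul_succ', ← e2, ih, nmul_succ', add_assoc]

lemma nmul_add {S : Type*} [AddCommSemigroup S] (a : S) (m n : ℕ)
    (hm : 1 ≤ m) (hn : 1 ≤ n) : nmul (m + n) a = nmul m a + nmul n a := by
  obtain ⟨m, rfl⟩ := Nat.exists_eq_add_of_le hm
  obtain ⟨n, rfl⟩ := Nat.exists_eq_add_of_le hn
  rw [add_comm 1 m, add_comm 1 n]
  exact nmul_add' a m n

/-- if two distinct multiples of `a` coincide, `a` has finite orbit. -/
lemma finite_of_rep {S : Type*} [AddCommSemigroup S] (a : S) (p q : ℕ)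
    (hp : 1 ≤ p) (hpq : p < q) (heq : nmul p a = nmul q a) :
    (addOrbit a).Finite := by
  have shift : ∀ t : ℕ, nmul (p + t) a = nmul (q + t) a := by
    intro t
    rcases Nat.eq_zero_or_pos t with rfl | ht
    · simpa using heq
    · rw [nmul_add a p t hp ht, nmul_add a q t (by omega) ht, heq]
  have descend : ∀ n : ℕ, 1 ≤ n → ∃ n', 1 ≤ n' ∧ n' ≤ q ∧ nmul n' a = nmul n a := by
    intro n
    induction n using Nat.strong_induction_on with
    | _ n ih =>
      intro hn
      by_cases hnq : n ≤ q
      · exact ⟨n, hn, hnq, rfl⟩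
      · have ht : q < n := by omega
        obtain ⟨t, rfl⟩ := Nat.exists_eq_add_of_le ht.le
        obtain ⟨n', h1, h2, h3⟩ := ih (p + t) (by omega) (by omega)
        exact ⟨n', h1, h2, by rw [h3, shift]⟩
  apply Set.Finite.subset ((Set.finite_Icc 1 q).image (fun n => nmul n a))
  rintro x ⟨n, hn, rfl⟩
  obtain ⟨n', h1, h2, h3⟩ := descend n hn
  exact ⟨n', Set.mem_Icc.mpr ⟨h1, h2⟩, h3⟩

theorem stmt_1 {S : Type*} [AddCommSemigroup S] [CommSemigroup S]
    (hdl : ∀ a b c : S, a * (b + c) = a * b + a * c)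
    (hdr : ∀ a b c : S, (a + b) * c = a * c + b * c)
    (a b : S) (k l : ℕ) (hk : 1 ≤ k) (hl : 1 ≤ l) (hkl : k ≠ l)
    (h : nmul k a = nmul l a + b)
    (hb : (addOrbit b).Finite) :
    (addOrbit a).Finite := by
  -- Key identity: (n + m*k)·a = (n + m*l)·a + m·b for n, m ≥ 1.
  have key : ∀ m n : ℕ, 1 ≤ m → 1 ≤ n →
      nmul (n + m * k) a = nmul (n + m * l) a + nmul m b := by
    intro m
    induction m with
    | zero => omega
    | succ m ih =>
      intro n _ hn
      rcases Nat.eq_zero_or_pos m with rfl | hm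
      · simp only [Nat.zero_add, one_mul]
        rw [nmul_add a n k hn hk, nmul_add a n l hn hl, h, nmul_one', add_assoc]
      · have e1 : n + (m + 1) * k = (n + m * k) + k := by ring
        have e2 : n + (m + 1) * l = (n + m * l) + l := by ring
        rw [e1, e2, nmul_add a (n + m * k) k (by omega) hk,
          nmul_add a (n + m * l) l (by omega) hl, ih n hm hn, h,
          show nmul (m + 1) b = nmul m b + b by
            rw [nmul_add b m 1 hm le_rfl, nmul_one']]
        exact add_add_add_comm _ _ _ _
  -- b has two coinciding multiples
  obtain ⟨m1, -, m2, -, hne, hfeq⟩ :=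
    (Set.infinite_univ (α := ℕ)).exists_ne_map_eq_of_mapsTo
      (f := fun n => nmul (n + 1) b) (t := addOrbit b)
      (fun n _ => ⟨n + 1, by omega, rfl⟩) hb
  wlog hlt : m1 < m2 generalizing m1 m2
  · exact this m2 m1 hne.symm hfeq.symm (by omega)
  set m := m1 + 1 with hm
  set e := m2 - m1 with he
  have hm1 : 1 ≤ m := by omega
  have he1 : 1 ≤ e := by omega
  have hbsat : nmul m b = nmul (m + e) b := by
    have : m + e = m2 + 1 := by omega
    rw [this]; exact hfeq
  have hp : nmul (1 + (m + e) * k) a = nmul (1 + (m + e) * l) a + nmul (m + e) b :=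
    key (m + e) 1 (by omega) le_rfl
  have hq : nmul (1 + e * l + m * k) a = nmul (1 + (m + e) * l) a + nmul m b := by
    have := key m (1 + e * l) hm1 (by omega)
    rw [this]
    congr 2
    ring
  have heq : nmul (1 + (m + e) * k) a = nmul (1 + e * l + m * k) a := by
    rw [hp, hq, hbsat]
  have hne2 : 1 + (m + e) * k ≠ 1 + e * l + m * k := by
    have h1 : e * k ≠ e * l := fun hc => hkl (Nat.eq_of_mul_eq_mul_left (by omega) hc)
    have h2 : (m + e) * k = m * k + e * k := by ring
    omega
  rcases Nat.lt_or_ge (1 + (m + e) * k) (1 + e * l + m * k) with h' | h'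
  · exact finite_of_rep a _ _ (by omega) h' heq
  · exact finite_of_rep a _ _ (by omega) (by omega) heq.symm
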